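/- arXiv:1309.7301 — 4 statements merged into one kernel-verified Lean document; each statement's English description precedes it below -/
import Mathlib

section
/- The 𝕜-algebra homomorphism 𝕜[t] → R̄ sending t to the class of xy is injective, and its image is exactly the invariant subring R̄^G. In particular, the invariant subring R̄^G is a polynomial ring in one variable over 𝕜, generated by xy. -/
set_option maxHeartbeats 1000000
set_option synthInstance.maxHeartbeats 400000

noncomputable section

section Grass

variable (𝕜 : Type) [Field 𝕜] (n k : ℕ)

/-- The ring `R̄ = 𝕜[x,y]/(x^k - y^(n-k))`. -/
abbrev Rbar : Type :=
  MvPolynomial (Fin 2) 𝕜 ⧸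
    Ideal.span {(MvPolynomial.X 0 : MvPolynomial (Fin 2) 𝕜) ^ k - MvPolynomial.X 1 ^ (n - k)}

/-- The class of `x` in `R̄`. -/
def xbar : Rbar 𝕜 n k := Ideal.Quotient.mk _ (MvPolynomial.X 0)
/-- The class of `y` in `R̄`. -/
def ybar : Rbar 𝕜 n k := Ideal.Quotient.mk _ (MvPolynomial.X 1)

end Grass

open MvPolynomial Polynomial in
lemma mk_monomial (𝕜 : Type) [Field 𝕜] (n k : ℕ) (d : Fin 2 →₀ ℕ) (c : 𝕜) :
    Ideal.Quotient.mk (Ideal.span {(MvPolynomial.X 0 : MvPolynomial (Fin 2) 𝕜)^k - MvPolynomial.X 1^(n-k)}) (monomial d c)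
      = c • (xbar 𝕜 n k ^ d 0 * ybar 𝕜 n k ^ d 1) := by
  simp only [xbar, ybar, ← Ideal.Quotient.mkₐ_eq_mk 𝕜, ← map_pow, ← map_mul, ← map_smul]
  congr 1
  rw [monomial_eq, Finsupp.prod_fintype _ _ (fun i => pow_zero _), Fin.prod_univ_two,
    MvPolynomial.smul_eq_C_mul]

lemma xbar_pow_k (𝕜 : Type) [Field 𝕜] (n k : ℕ) :
    xbar 𝕜 n k ^ k = ybar 𝕜 n k ^ (n - k) := by
  have h : (Ideal.Quotient.mk (Ideal.span {(MvPolynomial.X 0 : MvPolynomial (Fin 2) 𝕜)^k - MvPolynomial.X 1^(n-k)}))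
      (MvPolynomial.X 0 ^ k - MvPolynomial.X 1 ^ (n-k)) = 0 := by
    rw [Ideal.Quotient.eq_zero_iff_mem]
    exact Ideal.subset_span rfl
  rw [map_sub, map_pow, map_pow, sub_eq_zero] at h
  exact h

lemma ybar_pow_n (𝕜 : Type) [Field 𝕜] (n k : ℕ) (hkn : k ≤ n) :
    ybar 𝕜 n k ^ n = (xbar 𝕜 n k * ybar 𝕜 n k) ^ k := by
  have h1 : ybar 𝕜 n k ^ n = ybar 𝕜 n k ^ (n-k) * ybar 𝕜 n k ^ k := by
    rw [← pow_add]; congr 1; omega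
  rw [h1, ← xbar_pow_k, mul_pow]

lemma xbar_pow_n (𝕜 : Type) [Field 𝕜] (n k : ℕ) (hkn : k ≤ n) :
    xbar 𝕜 n k ^ n = (xbar 𝕜 n k * ybar 𝕜 n k) ^ (n - k) := by
  have h1 : xbar 𝕜 n k ^ n = xbar 𝕜 n k ^ (n-k) * xbar 𝕜 n k ^ k := by
    rw [← pow_add]; congr 1; omega
  rw [h1, xbar_pow_k, ← mul_pow]

lemma mono_mem (𝕜 : Type) [Field 𝕜] (n k : ℕ) (hn : 0 < n) (hkn : k ≤ n) (a b : ℕ)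
    (hab : (n:ℤ) ∣ (a:ℤ) - b) :
    ∃ j : ℕ, xbar 𝕜 n k ^ a * ybar 𝕜 n k ^ b = (xbar 𝕜 n k * ybar 𝕜 n k) ^ j := by
  obtain ⟨m, hm⟩ := hab
  rcases le_total a b with h | h
  · have hm0 : m ≤ 0 := by nlinarith [Int.natCast_nonneg n]
    obtain ⟨m', hm'⟩ : ∃ m' : ℕ, b = a + n * m' := by
      refine ⟨(-m).toNat, ?_⟩
      have hc : ((-m).toNat : ℤ) = -m := Int.toNat_of_nonneg (by omega)
      have : (b:ℤ) = a + n * ((-m).toNat : ℤ) := by rw [hc]; linarith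
      exact_mod_cast this
    refine ⟨a + k * m', ?_⟩
    subst hm'
    have h2 : xbar 𝕜 n k ^ a * ybar 𝕜 n k ^ (a + n * m')
        = (xbar 𝕜 n k * ybar 𝕜 n k) ^ a * (ybar 𝕜 n k ^ n) ^ m' := by
      rw [pow_add, pow_mul, mul_pow]; ring
    rw [h2, ybar_pow_n 𝕜 n k hkn, ← pow_mul, ← pow_add]
  · have hm0 : 0 ≤ m := by nlinarith [Int.natCast_nonneg n]
    obtain ⟨m', hm'⟩ : ∃ m' : ℕ, a = b + n * m' := by
      refine ⟨m.toNat, ?_⟩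
      have hc : (m.toNat : ℤ) = m := Int.toNat_of_nonneg hm0
      have : (a:ℤ) = b + n * (m.toNat : ℤ) := by rw [hc]; linarith
      exact_mod_cast this
    refine ⟨b + (n - k) * m', ?_⟩
    subst hm'
    have h2 : xbar 𝕜 n k ^ (b + n * m') * ybar 𝕜 n k ^ b
        = (xbar 𝕜 n k * ybar 𝕜 n k) ^ b * (xbar 𝕜 n k ^ n) ^ m' := by
      rw [pow_add, pow_mul, mul_pow]; ring
    rw [h2, xbar_pow_n 𝕜 n k hkn, ← pow_mul, ← pow_add]

lemma aeval_xy_injective (𝕜 : Type) [Field 𝕜] (n k : ℕ) (hk1 : 1 ≤ k) (hkn : k < n) :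
    Function.Injective (Polynomial.aeval (xbar 𝕜 n k * ybar 𝕜 n k) : Polynomial 𝕜 →ₐ[𝕜] Rbar 𝕜 n k) := by
  set φ : MvPolynomial (Fin 2) 𝕜 →ₐ[𝕜] Polynomial 𝕜 :=
    MvPolynomial.aeval ![Polynomial.X ^ (n-k), Polynomial.X ^ k] with hφ
  have hI : ∀ a ∈ Ideal.span {(MvPolynomial.X 0 : MvPolynomial (Fin 2) 𝕜)^k - MvPolynomial.X 1^(n-k)}, φ a = 0 := by
    intro a ha
    rw [Ideal.mem_span_singleton] at ha
    obtain ⟨c, rfl⟩ := ha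
    rw [map_mul]
    have h0 : φ (MvPolynomial.X 0 ^ k - MvPolynomial.X 1 ^ (n-k)) = 0 := by
      rw [map_sub, map_pow, map_pow]
      simp [hφ, ← pow_mul, mul_comm (n-k) k]
    rw [h0, zero_mul]
  set ψ : Rbar 𝕜 n k →ₐ[𝕜] Polynomial 𝕜 := Ideal.Quotient.liftₐ _ φ hI with hψdef
  have hψxy : ψ (xbar 𝕜 n k * ybar 𝕜 n k) = (Polynomial.X : Polynomial 𝕜) ^ n := by
    rw [map_mul]
    show ψ (Ideal.Quotient.mk _ (MvPolynomial.X 0)) * ψ (Ideal.Quotient.mk _ (MvPolynomial.X 1)) = _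
    rw [hψdef]
    simp only [Ideal.Quotient.liftₐ_apply, Ideal.Quotient.lift_mk]
    simp [hφ, ← pow_add]
    congr 1
    omega
  have hψ : ∀ p : Polynomial 𝕜, ψ (Polynomial.aeval (xbar 𝕜 n k * ybar 𝕜 n k) p)
      = Polynomial.aeval ((Polynomial.X : Polynomial 𝕜) ^ n) p := by
    intro p
    rw [← Polynomial.aeval_algHom_apply, hψxy]
  intro p q hpq
  have h2 := congrArg ψ hpq
  rw [hψ, hψ] at h2
  exact transcendental_iff_injective.mp
    ((Polynomial.transcendental_X 𝕜).pow (show 0 < n by omega)) h2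


open MvPolynomial in
/-- The `𝕜`-algebra homomorphism `𝕜[t] → R̄`, `t ↦ xy`, is injective, and its image
is exactly the invariant subring `R̄^G` for the action of the group `G = μ_n(𝕜)` of
`n`-th roots of unity acting by `ζ·x = ζx`, `ζ·y = ζ⁻¹y`.  In particular `R̄^G` is a
polynomial ring in one variable over `𝕜`, generated by `xy`. -/
theorem statement_0
    (𝕜 : Type) [Field 𝕜] (n k : ℕ)
    (hk1 : 1 ≤ k) (hkn : k ≤ n - 1)
    (hchar : ¬ (ringChar 𝕜 ∣ n)) (hprim : ∃ ζ : 𝕜, IsPrimitiveRoot ζ n)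
    (σ : rootsOfUnity n 𝕜 →* (Rbar 𝕜 n k ≃ₐ[𝕜] Rbar 𝕜 n k))
    (hx : ∀ ζ : rootsOfUnity n 𝕜, σ ζ (xbar 𝕜 n k) = ((ζ : 𝕜ˣ) : 𝕜) • xbar 𝕜 n k)
    (hy : ∀ ζ : rootsOfUnity n 𝕜,
      σ ζ (ybar 𝕜 n k) = (((ζ : 𝕜ˣ)⁻¹ : 𝕜ˣ) : 𝕜) • ybar 𝕜 n k) :
    Function.Injective
      (Polynomial.aeval (xbar 𝕜 n k * ybar 𝕜 n k) : Polynomial 𝕜 →ₐ[𝕜] Rbar 𝕜 n k) ∧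
    Set.range
      (Polynomial.aeval (xbar 𝕜 n k * ybar 𝕜 n k) : Polynomial 𝕜 →ₐ[𝕜] Rbar 𝕜 n k) =
      {r : Rbar 𝕜 n k | ∀ ζ : rootsOfUnity n 𝕜, σ ζ r = r} := by
  obtain ⟨ζ0, hζ⟩ := hprim
  have hn0 : 0 < n := by
    rcases Nat.eq_zero_or_pos n with h | h
    · exfalso; subst h; omega
    · exact h
  have hkn' : k < n := by omega
  set F : Polynomial 𝕜 →ₐ[𝕜] Rbar 𝕜 n k :=
    (Polynomial.aeval (xbar 𝕜 n k * ybar 𝕜 n k)) with hF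
  refine ⟨aeval_xy_injective 𝕜 n k hk1 hkn', ?_⟩
  have hζ0ne : ζ0 ≠ 0 := hζ.ne_zero (by omega)
  have hune : IsUnit ζ0 := hζ0ne.isUnit
  set u : 𝕜ˣ := hune.unit with hudef
  have hu : (u : 𝕜) = ζ0 := hune.unit_spec
  have hg : u ∈ rootsOfUnity n 𝕜 := by
    rw [mem_rootsOfUnity']
    rw [hu, hζ.pow_eq_one]
  set g : rootsOfUnity n 𝕜 := ⟨u, hg⟩ with hgdef
  have hcoe1 : ∀ i : ℕ, (((g ^ i : rootsOfUnity n 𝕜) : 𝕜ˣ) : 𝕜) = ζ0 ^ i := by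
    intro i
    push_cast [hgdef, hu]
    rfl
  have hcoe2 : ∀ i : ℕ, ((((g ^ i : rootsOfUnity n 𝕜) : 𝕜ˣ)⁻¹ : 𝕜ˣ) : 𝕜) = (ζ0 ^ i)⁻¹ := by
    intro i
    rw [Units.val_inv_eq_inv_val]
    rw [hcoe1 i]
  have hne : (n : 𝕜) ≠ 0 := by
    intro h0
    exact hchar ((CharP.cast_eq_zero_iff 𝕜 (ringChar 𝕜) n).mp h0)
  ext r
  simp only [Set.mem_range, Set.mem_setOf_eq]
  constructor
  · rintro ⟨p, rfl⟩ ζ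
    have hfix : σ ζ (xbar 𝕜 n k * ybar 𝕜 n k) = xbar 𝕜 n k * ybar 𝕜 n k := by
      rw [map_mul, hx, hy, smul_mul_smul_comm, ← Units.val_mul, mul_inv_cancel, Units.val_one,
        one_smul]
    rw [hF, ← Polynomial.aeval_algHom_apply, hfix]
  · intro hr
    obtain ⟨p, rfl⟩ := Ideal.Quotient.mk_surjective r
    set I : Ideal (MvPolynomial (Fin 2) 𝕜) :=
      Ideal.span {(MvPolynomial.X 0 : MvPolynomial (Fin 2) 𝕜) ^ k - MvPolynomial.X 1 ^ (n - k)}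
      with hIdef
    -- per-monomial claim
    have claim : ∀ (d : Fin 2 →₀ ℕ) (c : 𝕜),
        ∑ i ∈ Finset.range n, σ (g ^ i) (Ideal.Quotient.mk I (monomial d c)) ∈ F.range := by
      intro d c
      set a := d 0
      set b := d 1
      set w : 𝕜 := ζ0 ^ ((a : ℤ) - b) with hwdef
      have hwi : ∀ i : ℕ, (ζ0 ^ i) ^ a * ((ζ0 ^ i)⁻¹) ^ b = w ^ i := by
        intro i
        rw [hwdef, ← zpow_natCast (ζ0 ^ ((a : ℤ) - b)) i, ← zpow_mul]
        rw [inv_pow, ← pow_mul, ← pow_mul, ← zpow_natCast ζ0 (i * a), ← zpow_natCast ζ0 (i * b),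
          ← zpow_neg, ← zpow_add₀ hζ0ne]
        congr 1
        push_cast
        ring
      have hterm : ∀ i : ℕ, σ (g ^ i) (Ideal.Quotient.mk I (monomial d c))
          = w ^ i • (c • (xbar 𝕜 n k ^ a * ybar 𝕜 n k ^ b)) := by
        intro i
        rw [mk_monomial, map_smul, map_mul,
          show (σ (g ^ i)) (xbar 𝕜 n k ^ a) = ((σ (g ^ i)) (xbar 𝕜 n k)) ^ a from map_pow _ _ _,
          show (σ (g ^ i)) (ybar 𝕜 n k ^ b) = ((σ (g ^ i)) (ybar 𝕜 n k)) ^ b from map_pow _ _ _,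
          hx, hy, hcoe1, hcoe2, smul_pow, smul_pow, smul_mul_smul_comm, hwi, smul_comm]
      rw [Finset.sum_congr rfl fun i _ => hterm i, ← Finset.sum_smul]
      by_cases hone : w = 1
      · have hdvd : (n : ℤ) ∣ (a : ℤ) - b := (hζ.zpow_eq_one_iff_dvd _).mp (hwdef ▸ hone)
        obtain ⟨j, hj⟩ := mono_mem 𝕜 n k hn0 (le_of_lt hkn') a b hdvd
        rw [hj]
        refine Subalgebra.smul_mem _ (Subalgebra.smul_mem _ ?_ _) _
        exact ⟨Polynomial.X ^ j, by simp [hF]⟩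
      · have hzero : ∑ i ∈ Finset.range n, w ^ i = 0 := by
          have hwn : w ^ n = 1 := by
            rw [hwdef, ← zpow_natCast (ζ0 ^ ((a : ℤ) - b)) n, ← zpow_mul, mul_comm, zpow_mul,
              zpow_natCast, hζ.pow_eq_one, one_zpow]
          have := geom_sum_mul w n
          rw [hwn, sub_self] at this
          rcases mul_eq_zero.mp this with h | h
          · exact h
          · exact absurd (sub_eq_zero.mp h) hone
        rw [hzero, zero_smul]
        exact Subalgebra.zero_mem _
    have htot : ∑ i ∈ Finset.range n, σ (g ^ i) (Ideal.Quotient.mk I p) ∈ F.range := by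
      have hexp : ∀ i : ℕ, σ (g ^ i) (Ideal.Quotient.mk I p)
          = ∑ d ∈ p.support, σ (g ^ i) (Ideal.Quotient.mk I (monomial d (coeff d p))) := by
        intro i
        rw [← map_sum, ← map_sum]
        congr 2
        exact (p.as_sum)
      rw [Finset.sum_congr rfl fun i _ => hexp i, Finset.sum_comm]
      exact sum_mem fun d _ => claim d (coeff d p)
    have havg : (n : 𝕜)⁻¹ • ∑ i ∈ Finset.range n, σ (g ^ i) (Ideal.Quotient.mk I p)
        = Ideal.Quotient.mk I p := by
      rw [Finset.sum_congr rfl fun i _ => hr (g ^ i), Finset.sum_const, Finset.card_range,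
        ← Nat.cast_smul_eq_nsmul 𝕜, smul_smul, inv_mul_cancel₀ hne, one_smul]
    have hmem : Ideal.Quotient.mk I p ∈ F.range := by
      rw [← havg]
      exact Subalgebra.smul_mem _ htot _
    rwa [AlgHom.mem_range] at hmem
end
end

section
/- For each j ∈ {0,1,…,n−1}, the eigenspace R̄_j = {r ∈ R̄ : ζ·r = ζ^j r for all ζ ∈ G} is a free module of rank one over Z̄ = 𝕜[xy], generated by x^j when 0 ≤ j ≤ k and by y^{n−j} when k ≤ j ≤ n−1 (the two generators agreeing when j = k, since x^k = y^{n−k} in R̄). Consequently R̄ = ⊕_{j=0}^{n−1} R̄_j and R̄ is a free Z̄-module of rank n. -/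
set_option maxHeartbeats 1000000
set_option synthInstance.maxHeartbeats 400000

noncomputable section

section Grass

variable (𝕜 : Type) [Field 𝕜] (n k : ℕ)

/-- `Z̄ = 𝕜[xy] ⊆ R̄`, the `𝕜`-subalgebra generated by `xy`. -/
def Zbar : Subalgebra 𝕜 (Rbar 𝕜 n k) := Algebra.adjoin 𝕜 {xbar 𝕜 n k * ybar 𝕜 n k}

/-- The generator of the eigenspace `R̄_j`: `x^j` for `0 ≤ j ≤ k` and `y^(n-j)` for
`k ≤ j ≤ n-1` (these agree when `j = k`, since `x^k = y^(n-k)` in `R̄`). -/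
def egen (j : ℕ) : Rbar 𝕜 n k := if j ≤ k then xbar 𝕜 n k ^ j else ybar 𝕜 n k ^ (n - j)

end Grass

namespace GrassAux

variable (𝕜 : Type) [Field 𝕜] (n k : ℕ)

def Pg : Polynomial (Polynomial 𝕜) := Polynomial.X ^ k - Polynomial.C (Polynomial.X ^ (n-k))

def phi : MvPolynomial (Fin 2) 𝕜 →ₐ[𝕜] Polynomial (Polynomial 𝕜) :=
  MvPolynomial.aeval ![Polynomial.X, Polynomial.C Polynomial.X]

def psi : Polynomial (Polynomial 𝕜) →ₐ[𝕜] MvPolynomial (Fin 2) 𝕜 :=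
  Polynomial.aevalTower (Polynomial.aeval (MvPolynomial.X 1)) (MvPolynomial.X 0)

lemma hpsiphi : (psi 𝕜).comp (phi 𝕜) = AlgHom.id _ _ := by
  apply MvPolynomial.algHom_ext
  intro i
  fin_cases i <;> simp [phi, psi]

lemma hphipsi : (phi 𝕜).comp (psi 𝕜) = AlgHom.id _ _ := by
  apply Polynomial.algHom_ext'
  · apply Polynomial.algHom_ext
    simp [phi, psi]
  · simp [phi, psi]

def E0 : MvPolynomial (Fin 2) 𝕜 ≃ₐ[𝕜] Polynomial (Polynomial 𝕜) :=
  AlgEquiv.ofAlgHom (phi 𝕜) (psi 𝕜) (hphipsi 𝕜) (hpsiphi 𝕜)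

lemma E0_apply (p) : E0 𝕜 p = phi 𝕜 p := rfl
lemma E0_symm_apply (p) : (E0 𝕜).symm p = psi 𝕜 p := rfl

abbrev relg : MvPolynomial (Fin 2) 𝕜 :=
  (MvPolynomial.X 0 : MvPolynomial (Fin 2) 𝕜) ^ k - MvPolynomial.X 1 ^ (n - k)

lemma E0_rel : E0 𝕜 (relg 𝕜 n k) = Pg 𝕜 n k := by
  simp [E0_apply, phi, Pg, relg]

def Ebar : Rbar 𝕜 n k ≃ₐ[𝕜] AdjoinRoot (Pg 𝕜 n k) :=
  Ideal.quotientEquivAlg (Ideal.span {relg 𝕜 n k}) (Ideal.span {Pg 𝕜 n k}) (E0 𝕜)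
    (by rw [Ideal.map_span, Set.image_singleton]; congr 1; congr 1; exact (E0_rel 𝕜 n k).symm)

lemma Ebar_mk (p) : Ebar 𝕜 n k (Ideal.Quotient.mk _ p) = AdjoinRoot.mk _ (E0 𝕜 p) := rfl
lemma Ebar_symm_mk (p) :
    (Ebar 𝕜 n k).symm (AdjoinRoot.mk _ p) = Ideal.Quotient.mk _ ((E0 𝕜).symm p) := rfl

lemma Pg_monic (hk1 : 1 ≤ k) : (Pg 𝕜 n k).Monic := by
  refine Polynomial.monic_X_pow_sub ?_
  refine lt_of_le_of_lt (Polynomial.degree_C_le) ?_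
  exact_mod_cast Nat.cast_pos.mpr hk1

lemma Pg_natDegree : (Pg 𝕜 n k).natDegree = k := by
  rw [Pg]; exact Polynomial.natDegree_X_pow_sub_C

variable (hk1 : 1 ≤ k)

def pb : PowerBasis (Polynomial 𝕜) (AdjoinRoot (Pg 𝕜 n k)) :=
  AdjoinRoot.powerBasis' (Pg_monic 𝕜 n k hk1)

def Bq : Module.Basis (ℕ × Fin k) 𝕜 (AdjoinRoot (Pg 𝕜 n k)) :=
  ((Polynomial.basisMonomials 𝕜).smulTower (pb 𝕜 n k hk1).basis).reindex
    (Equiv.prodCongr (Equiv.refl ℕ)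
      (finCongr (by rw [pb, AdjoinRoot.powerBasis'_dim, Pg_natDegree])))

lemma Bq_apply (b : ℕ) (a : Fin k) :
    Bq 𝕜 n k hk1 (b, a) =
      AdjoinRoot.mk _ (Polynomial.C (Polynomial.X ^ b) * Polynomial.X ^ (a : ℕ)) := by
  have hgen : (pb 𝕜 n k hk1).gen = AdjoinRoot.mk (Pg 𝕜 n k) Polynomial.X := by
    rw [pb, AdjoinRoot.powerBasis'_gen]; rfl
  rw [Bq, Module.Basis.reindex_apply]
  simp only [Equiv.prodCongr_symm, Equiv.refl_symm, Equiv.prodCongr_apply, Equiv.coe_refl,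
    Prod.map_apply, id_eq, finCongr_symm, finCongr_apply, Module.Basis.smulTower_apply,
    PowerBasis.basis_eq_pow, Polynomial.coe_basisMonomials, Fin.coe_cast]
  rw [Algebra.smul_def, hgen, map_mul, map_pow]
  congr 1
  rw [Polynomial.monomial_one_right_eq_X_pow, AdjoinRoot.algebraMap_eq, map_pow, map_pow]
  rfl

def Bbar : Module.Basis (ℕ × Fin k) 𝕜 (Rbar 𝕜 n k) :=
  (Bq 𝕜 n k hk1).map (Ebar 𝕜 n k).symm.toLinearEquiv

lemma Bbar_apply (b : ℕ) (a : Fin k) :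
    Bbar 𝕜 n k hk1 (b, a) = ybar 𝕜 n k ^ b * xbar 𝕜 n k ^ (a : ℕ) := by
  rw [Bbar, Module.Basis.map_apply, Bq_apply]
  show (Ebar 𝕜 n k).symm (AdjoinRoot.mk _ _) = _
  rw [Ebar_symm_mk, E0_symm_apply]
  simp only [map_mul, map_pow]
  rw [xbar, ybar]
  simp [psi]

lemma xk_eq_ym : xbar 𝕜 n k ^ k = ybar 𝕜 n k ^ (n - k) := by
  rw [xbar, ybar, ← map_pow, ← map_pow, Ideal.Quotient.eq]
  exact Ideal.subset_span rfl

lemma xpow_reduce (a : ℕ) :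
    xbar 𝕜 n k ^ a = ybar 𝕜 n k ^ ((n - k) * (a / k)) * xbar 𝕜 n k ^ (a % k) := by
  conv_lhs => rw [← Nat.div_add_mod a k]
  rw [pow_add, pow_mul, xk_eq_ym, ← pow_mul]

def vfam (p : ℕ × Fin n) : Rbar 𝕜 n k :=
  (xbar 𝕜 n k * ybar 𝕜 n k) ^ p.1 * egen 𝕜 n k (p.2 : ℕ)

def fidx (p : ℕ × Fin n) : ℕ × Fin k :=
  if (p.2 : ℕ) ≤ k then
    (p.1 + (n - k) * ((p.1 + (p.2 : ℕ)) / k), ⟨(p.1 + (p.2 : ℕ)) % k, Nat.mod_lt _ hk1⟩)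
  else
    (p.1 + (n - (p.2 : ℕ)) + (n - k) * (p.1 / k), ⟨p.1 % k, Nat.mod_lt _ hk1⟩)

lemma vfam_eq (p : ℕ × Fin n) :
    vfam 𝕜 n k p = Bbar 𝕜 n k hk1 (fidx n k hk1 p) := by
  obtain ⟨i, j⟩ := p
  by_cases hj : (j : ℕ) ≤ k
  · rw [vfam, egen, if_pos hj, fidx, if_pos hj, Bbar_apply]
    have h1 := xpow_reduce 𝕜 n k (i + (j : ℕ))
    have h2 : (xbar 𝕜 n k * ybar 𝕜 n k) ^ i * xbar 𝕜 n k ^ (j : ℕ)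
        = xbar 𝕜 n k ^ (i + (j : ℕ)) * ybar 𝕜 n k ^ i := by
      rw [mul_pow, pow_add]; ring
    rw [h2, h1, pow_add]; ring
  · rw [vfam, egen, if_neg hj, fidx, if_neg hj, Bbar_apply]
    have h1 := xpow_reduce 𝕜 n k i
    have h2 : (xbar 𝕜 n k * ybar 𝕜 n k) ^ i * ybar 𝕜 n k ^ (n - (j : ℕ))
        = xbar 𝕜 n k ^ i * ybar 𝕜 n k ^ (i + (n - (j : ℕ))) := by
      rw [mul_pow, pow_add]; ring
    rw [h2, h1, pow_add, pow_add]; ring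

lemma int_aux {a b nn : ℤ} (h : ∃ c, a - b = nn * c) (ha : 0 ≤ a) (hb : 0 ≤ b)
    (han : a < nn) (hbn : b < nn) : a = b := by
  have hn : 0 < nn := lt_of_le_of_lt ha han
  rcases h with ⟨c, hc⟩
  rcases lt_trichotomy c 0 with h | h | h
  · have h1 : nn * c ≤ nn * (-1) := mul_le_mul_of_nonneg_left (by omega) (by omega)
    linarith
  · subst h; linarith [hc]
  · have h1 : nn * 1 ≤ nn * c := mul_le_mul_of_nonneg_left (by omega) (by omega)
    linarith

lemma int_aux2 {a nn : ℤ} (h : ∃ c, a = nn * c) (h1 : 0 < a) (h2 : a < nn) : False := by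
  have hn : 0 < nn := lt_trans h1 h2
  rcases h with ⟨c, hc⟩
  rcases lt_trichotomy c 0 with h | h | h
  · have h3 : nn * c ≤ nn * (-1) := mul_le_mul_of_nonneg_left (by omega) (by omega)
    linarith
  · subst h; linarith [hc]
  · have h3 : nn * 1 ≤ nn * c := mul_le_mul_of_nonneg_left (by omega) (by omega)
    linarith

lemma fidx_inj (hkn : k ≤ n - 1) : Function.Injective (fidx n k hk1) := by
  have hk0 : 0 < k := hk1
  have hn : 2 ≤ n := by omega
  have hkn' : k ≤ n := by omega
  rintro ⟨i, j⟩ ⟨i', j'⟩ h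
  have hj_lt : (j : ℕ) < n := j.isLt
  have hj'_lt : (j' : ℕ) < n := j'.isLt
  by_cases hj : (j : ℕ) ≤ k
  · by_cases hj' : (j' : ℕ) ≤ k
    · -- case 1 : both ≤ k
      rw [fidx, fidx, if_pos hj, if_pos hj'] at h
      simp only [Prod.mk.injEq, Fin.mk.injEq] at h
      obtain ⟨h1, h2⟩ := h
      set q := (i + (j : ℕ)) / k with hq
      set q' := (i' + (j' : ℕ)) / k with hq'
      have e1 : k * q + (i + (j : ℕ)) % k = i + (j : ℕ) := Nat.div_add_mod _ k
      have e2 : k * q' + (i' + (j' : ℕ)) % k = i' + (j' : ℕ) := Nat.div_add_mod _ k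
      rw [h2] at e1
      have h1' := h1; zify [hkn'] at h1'
      have e1' := e1; zify at e1'
      have e2' := e2; zify at e2'
      have key : ((q : ℤ) - q') * n = (j : ℤ) - j' := by linear_combination e1' - e2' + h1'
      have hjj' : (j : ℤ) = j' := by
        refine int_aux (nn := (n : ℤ)) ⟨(q : ℤ) - q', by linarith [key]⟩ (by positivity) (by positivity)
          (by omega) (by omega)
      have hqq' : q = q' := by
        have h0 : ((q : ℤ) - q') * n = 0 := by rw [key, hjj']; ring
        rcases mul_eq_zero.1 h0 with h | h <;> omega
      have hii' : i = i' := by rw [hqq'] at h1; omega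
      have hjn : (j : ℕ) = j' := by exact_mod_cast hjj'
      simp [hii', Fin.ext_iff, hjn]
    · -- case 2 : j ≤ k < j' : impossible
      exfalso
      rw [fidx, fidx, if_pos hj, if_neg hj'] at h
      simp only [Prod.mk.injEq, Fin.mk.injEq] at h
      obtain ⟨h1, h2⟩ := h
      set q := (i + (j : ℕ)) / k with hq
      set q' := i' / k with hq'
      have e1 : k * q + (i + (j : ℕ)) % k = i + (j : ℕ) := Nat.div_add_mod _ k
      have e2 : k * q' + i' % k = i' := Nat.div_add_mod _ k
      rw [h2] at e1
      have h1' := h1; zify [hkn', le_of_lt hj'_lt] at h1'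
      have e1' := e1; zify at e1'
      have e2' := e2; zify at e2'
      have key : ((q : ℤ) - q') * n = (j : ℤ) + n - j' := by linear_combination e1' - e2' + h1'
      exact int_aux2 (nn := (n : ℤ)) (a := (j : ℤ) + n - j') ⟨(q : ℤ) - q', by linarith [key]⟩ (by omega) (by omega)
  · by_cases hj' : (j' : ℕ) ≤ k
    · -- case 3 : j' ≤ k < j : impossible
      exfalso
      rw [fidx, fidx, if_neg hj, if_pos hj'] at h
      simp only [Prod.mk.injEq, Fin.mk.injEq] at h
      obtain ⟨h1, h2⟩ := h
      set q := i / k with hq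
      set q' := (i' + (j' : ℕ)) / k with hq'
      have e1 : k * q + i % k = i := Nat.div_add_mod _ k
      have e2 : k * q' + (i' + (j' : ℕ)) % k = i' + (j' : ℕ) := Nat.div_add_mod _ k
      rw [h2] at e1
      have h1' := h1; zify [hkn', le_of_lt hj_lt] at h1'
      have e1' := e1; zify at e1'
      have e2' := e2; zify at e2'
      have key : ((q' : ℤ) - q) * n = (j' : ℤ) + n - j := by linear_combination e2' - e1' - h1'
      exact int_aux2 (nn := (n : ℤ)) (a := (j' : ℤ) + n - j) ⟨(q' : ℤ) - q, by linarith [key]⟩ (by omega) (by omega)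
    · -- case 4 : both > k
      rw [fidx, fidx, if_neg hj, if_neg hj'] at h
      simp only [Prod.mk.injEq, Fin.mk.injEq] at h
      obtain ⟨h1, h2⟩ := h
      set q := i / k with hq
      set q' := i' / k with hq'
      have e1 : k * q + i % k = i := Nat.div_add_mod _ k
      have e2 : k * q' + i' % k = i' := Nat.div_add_mod _ k
      rw [h2] at e1
      have h1' := h1; zify [hkn', le_of_lt hj_lt, le_of_lt hj'_lt] at h1'
      have e1' := e1; zify at e1'
      have e2' := e2; zify at e2'
      have key : ((q : ℤ) - q') * n = (j : ℤ) - j' := by linear_combination e1' - e2' + h1'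
      have hjj' : (j : ℤ) = j' := by
        refine int_aux (nn := (n : ℤ)) ⟨(q : ℤ) - q', by linarith [key]⟩ (by positivity) (by positivity)
          (by omega) (by omega)
      have hqq' : q = q' := by
        have h0 : ((q : ℤ) - q') * n = 0 := by rw [key, hjj']; ring
        rcases mul_eq_zero.1 h0 with h | h <;> omega
      have hii' : i = i' := by rw [hqq'] at e1; omega
      have hjn : (j : ℕ) = j' := by exact_mod_cast hjj'
      simp [hii', Fin.ext_iff, hjn]

include hk1 in
lemma vfam_li (hkn : k ≤ n - 1) : LinearIndependent 𝕜 (vfam 𝕜 n k) := by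
  have h := (Bbar 𝕜 n k hk1).linearIndependent.comp _ (fidx_inj n k hk1 hkn)
  have he : vfam 𝕜 n k = (Bbar 𝕜 n k hk1) ∘ (fidx n k hk1) := funext (vfam_eq 𝕜 n k hk1)
  rwa [he]

lemma mono_mem1 (hk1' : 1 ≤ k) (hkn : k ≤ n - 1) :
    ∀ a b : ℕ, b + 1 ≤ a + (n - k) →
      xbar 𝕜 n k ^ a * ybar 𝕜 n k ^ b ∈ Submodule.span 𝕜 (Set.range (vfam 𝕜 n k)) := by
  intro a
  induction a using Nat.strong_induction_on with
  | _ a IH =>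
    intro b hb
    by_cases hw : a ≤ b + k
    · by_cases hab : b ≤ a
      · refine Submodule.subset_span ⟨(b, ⟨a - b, by omega⟩), ?_⟩
        rw [vfam, egen]
        simp only []
        rw [if_pos (show a - b ≤ k by omega)]
        obtain ⟨d, rfl⟩ : ∃ d, a = b + d := ⟨a - b, by omega⟩
        simp only [Nat.add_sub_cancel_left]
        rw [mul_pow, pow_add]; ring
      · refine Submodule.subset_span ⟨(a, ⟨n - (b - a), by omega⟩), ?_⟩
        rw [vfam, egen]
        simp only []
        rw [if_neg (show ¬ (n - (b - a) ≤ k) by omega)]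
        have h1 : n - (n - (b - a)) = b - a := by omega
        rw [h1]
        obtain ⟨d, rfl⟩ : ∃ d, b = a + d := ⟨b - a, by omega⟩
        simp only [Nat.add_sub_cancel_left]
        rw [mul_pow, pow_add]; ring
    · have hx : xbar 𝕜 n k ^ a * ybar 𝕜 n k ^ b
          = xbar 𝕜 n k ^ (a - k) * ybar 𝕜 n k ^ (b + (n - k)) := by
        obtain ⟨d, rfl⟩ : ∃ d, a = d + k := ⟨a - k, by omega⟩
        rw [pow_add, pow_add, xk_eq_ym]
        simp only [Nat.add_sub_cancel]
        ring
      rw [hx]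
      exact IH (a - k) (by omega) _ (by omega)

lemma mono_mem (hk1' : 1 ≤ k) (hkn : k ≤ n - 1) :
    ∀ b a : ℕ, xbar 𝕜 n k ^ a * ybar 𝕜 n k ^ b ∈ Submodule.span 𝕜 (Set.range (vfam 𝕜 n k)) := by
  intro b
  induction b using Nat.strong_induction_on with
  | _ b IH =>
    intro a
    by_cases hb : b + 1 ≤ a + (n - k)
    · exact mono_mem1 𝕜 n k hk1' hkn a b hb
    · have hy : xbar 𝕜 n k ^ a * ybar 𝕜 n k ^ b
          = xbar 𝕜 n k ^ (a + k) * ybar 𝕜 n k ^ (b - (n - k)) := by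
        obtain ⟨d, rfl⟩ : ∃ d, b = d + (n - k) := ⟨b - (n - k), by omega⟩
        rw [pow_add, pow_add, ← xk_eq_ym]
        simp only [Nat.add_sub_cancel]
        ring
      rw [hy]
      exact IH (b - (n - k)) (by omega) (a + k)

include hk1 in
lemma vfam_span (hkn : k ≤ n - 1) :
    Submodule.span 𝕜 (Set.range (vfam 𝕜 n k)) = ⊤ := by
  rw [eq_top_iff, ← (Bbar 𝕜 n k hk1).span_eq, Submodule.span_le]
  rintro _ ⟨⟨b, a⟩, rfl⟩
  rw [Bbar_apply, mul_comm]
  exact mono_mem 𝕜 n k hk1 hkn b (a : ℕ)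

def Bv (hkn : k ≤ n - 1) : Module.Basis (ℕ × Fin n) 𝕜 (Rbar 𝕜 n k) :=
  Module.Basis.mk (vfam_li 𝕜 n k hk1 hkn) (by rw [vfam_span 𝕜 n k hk1 hkn])

lemma Bv_apply (hkn : k ≤ n - 1) (p : ℕ × Fin n) :
    Bv 𝕜 n k hk1 hkn p = vfam 𝕜 n k p := Module.Basis.mk_apply _ _ _

include hk1 in
lemma unique_coeffs (hkn : k ≤ n - 1) (c₁ c₂ : Fin n → ↥(Zbar 𝕜 n k))
    (h : ∑ j : Fin n, (c₁ j : Rbar 𝕜 n k) * egen 𝕜 n k (j : ℕ)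
       = ∑ j : Fin n, (c₂ j : Rbar 𝕜 n k) * egen 𝕜 n k (j : ℕ)) : c₁ = c₂ := by
  have hmem : ∀ j : Fin n, ∃ q : Polynomial 𝕜,
      Polynomial.aeval (R := 𝕜) (xbar 𝕜 n k * ybar 𝕜 n k) q = (c₁ j : Rbar 𝕜 n k) - c₂ j := by
    intro j
    rw [← AlgHom.mem_range, ← Algebra.adjoin_singleton_eq_range_aeval 𝕜 (xbar 𝕜 n k * ybar 𝕜 n k)]
    exact (Zbar 𝕜 n k).sub_mem (c₁ j).2 (c₂ j).2
  choose p hp using hmem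
  have h0 : ∑ j : Fin n,
      (Polynomial.aeval (xbar 𝕜 n k * ybar 𝕜 n k) (p j)) * egen 𝕜 n k (j : ℕ) = 0 := by
    simp_rw [hp, sub_mul]
    rw [Finset.sum_sub_distrib, h, sub_self]
  set D := (Finset.univ.sup fun j : Fin n => (p j).natDegree) + 1 with hD
  have hDlt : ∀ j : Fin n, (p j).natDegree < D :=
    fun j => Nat.lt_succ_of_le (Finset.le_sup (f := fun j : Fin n => (p j).natDegree) (Finset.mem_univ j))
  have hinner : ∀ j : Fin n, ∑ i ∈ Finset.range D, ((p j).coeff i) • vfam 𝕜 n k (i, j)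
      = (Polynomial.aeval (xbar 𝕜 n k * ybar 𝕜 n k) (p j)) * egen 𝕜 n k (j : ℕ) := by
    intro j
    rw [Polynomial.aeval_eq_sum_range' (hDlt j), Finset.sum_mul]
    refine Finset.sum_congr rfl fun i _ => ?_
    rw [vfam, smul_mul_assoc]
  have h1 : ∑ q ∈ (Finset.range D) ×ˢ (Finset.univ : Finset (Fin n)),
      ((p q.2).coeff q.1) • vfam 𝕜 n k q = 0 := by
    rw [Finset.sum_product_right]
    exact (Finset.sum_congr rfl fun j _ => hinner j).trans h0
  have hz := (linearIndependent_iff'.1 (vfam_li 𝕜 n k hk1 hkn)) _ _ h1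
  funext j
  have hj0 : Polynomial.aeval (xbar 𝕜 n k * ybar 𝕜 n k) (p j) = 0 := by
    rw [Polynomial.aeval_eq_sum_range' (hDlt j)]
    refine Finset.sum_eq_zero fun i hi => ?_
    rw [hz (i, j) (Finset.mem_product.2 ⟨hi, Finset.mem_univ _⟩), zero_smul]
  have hsub := hp j
  rw [hj0] at hsub
  exact Subtype.ext (sub_eq_zero.1 hsub.symm)

include hk1 in
lemma exists_coeffs (hkn : k ≤ n - 1) (r : Rbar 𝕜 n k) :
    ∃ c : Fin n → ↥(Zbar 𝕜 n k),
      r = ∑ j : Fin n, (c j : Rbar 𝕜 n k) * egen 𝕜 n k (j : ℕ) := by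
  have htm : xbar 𝕜 n k * ybar 𝕜 n k ∈ Zbar 𝕜 n k := Algebra.subset_adjoin rfl
  set B := Bv 𝕜 n k hk1 hkn with hB
  set S := (B.repr r).support.image Prod.fst with hS
  refine ⟨fun j => ⟨∑ i ∈ S, (B.repr r (i, j)) • (xbar 𝕜 n k * ybar 𝕜 n k) ^ i, ?_⟩, ?_⟩
  · exact sum_mem fun i _ => (Zbar 𝕜 n k).smul_mem (pow_mem htm i) _
  · conv_lhs => rw [← B.linearCombination_repr r]
    rw [Finsupp.linearCombination_apply, Finsupp.sum]
    have hsub : (B.repr r).support ⊆ S ×ˢ Finset.univ := by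
      intro q hq
      rw [Finset.mem_product]
      exact ⟨Finset.mem_image_of_mem _ hq, Finset.mem_univ _⟩
    rw [Finset.sum_subset hsub (fun q _ hq => by rw [Finsupp.notMem_support_iff.1 hq, zero_smul])]
    rw [Finset.sum_product_right]
    refine Finset.sum_congr rfl fun j _ => ?_
    rw [Finset.sum_mul]
    refine Finset.sum_congr rfl fun i _ => ?_
    rw [smul_mul_assoc]
    congr 1
    rw [hB, Bv_apply, vfam]

variable {n k} in
lemma sigma_t (σ : rootsOfUnity n 𝕜 →* (Rbar 𝕜 n k ≃ₐ[𝕜] Rbar 𝕜 n k))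
    (hx : ∀ ζ : rootsOfUnity n 𝕜, σ ζ (xbar 𝕜 n k) = ((ζ : 𝕜ˣ) : 𝕜) • xbar 𝕜 n k)
    (hy : ∀ ζ : rootsOfUnity n 𝕜,
      σ ζ (ybar 𝕜 n k) = (((ζ : 𝕜ˣ)⁻¹ : 𝕜ˣ) : 𝕜) • ybar 𝕜 n k)
    (ζ : rootsOfUnity n 𝕜) :
    σ ζ (xbar 𝕜 n k * ybar 𝕜 n k) = xbar 𝕜 n k * ybar 𝕜 n k := by
  rw [map_mul, hx, hy, smul_mul_smul_comm, ← Units.val_mul]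
  simp

variable {n k} in
lemma sigma_fix (σ : rootsOfUnity n 𝕜 →* (Rbar 𝕜 n k ≃ₐ[𝕜] Rbar 𝕜 n k))
    (hx : ∀ ζ : rootsOfUnity n 𝕜, σ ζ (xbar 𝕜 n k) = ((ζ : 𝕜ˣ) : 𝕜) • xbar 𝕜 n k)
    (hy : ∀ ζ : rootsOfUnity n 𝕜,
      σ ζ (ybar 𝕜 n k) = (((ζ : 𝕜ˣ)⁻¹ : 𝕜ˣ) : 𝕜) • ybar 𝕜 n k)
    (ζ : rootsOfUnity n 𝕜) (z : Rbar 𝕜 n k) (hz : z ∈ Zbar 𝕜 n k) :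
    σ ζ z = z := by
  have : z ∈ (Polynomial.aeval (R := 𝕜) (xbar 𝕜 n k * ybar 𝕜 n k)).range := by
    rw [← Algebra.adjoin_singleton_eq_range_aeval 𝕜 (xbar 𝕜 n k * ybar 𝕜 n k)]
    exact hz
  obtain ⟨q, hq⟩ := this
  have h3 : σ ζ (Polynomial.aeval (R := 𝕜) (xbar 𝕜 n k * ybar 𝕜 n k) q)
      = Polynomial.aeval (R := 𝕜) (xbar 𝕜 n k * ybar 𝕜 n k) q := by
    rw [← Polynomial.aeval_algHom_apply (σ ζ) (xbar 𝕜 n k * ybar 𝕜 n k) q,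
      sigma_t 𝕜 σ hx hy ζ]
  rw [← hq]
  exact h3

variable {n k} in
lemma sigma_egen (σ : rootsOfUnity n 𝕜 →* (Rbar 𝕜 n k ≃ₐ[𝕜] Rbar 𝕜 n k))
    (hx : ∀ ζ : rootsOfUnity n 𝕜, σ ζ (xbar 𝕜 n k) = ((ζ : 𝕜ˣ) : 𝕜) • xbar 𝕜 n k)
    (hy : ∀ ζ : rootsOfUnity n 𝕜,
      σ ζ (ybar 𝕜 n k) = (((ζ : 𝕜ˣ)⁻¹ : 𝕜ˣ) : 𝕜) • ybar 𝕜 n k)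
    (ζ : rootsOfUnity n 𝕜) (j : ℕ) (hj : j < n) :
    σ ζ (egen 𝕜 n k j) = (((ζ : 𝕜ˣ) : 𝕜) ^ j) • egen 𝕜 n k j := by
  rw [egen]
  by_cases hjk : j ≤ k
  · rw [if_pos hjk, map_pow, hx, smul_pow]
  · rw [if_neg hjk, map_pow, hy, smul_pow]
    congr 1
    have h1 : (ζ : 𝕜ˣ) ^ n = 1 := (mem_rootsOfUnity n _).1 ζ.2
    have h2 : (ζ : 𝕜ˣ) ^ j * (ζ : 𝕜ˣ) ^ (n - j) = 1 := by
      rw [← pow_add, show j + (n - j) = n by omega, h1]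
    have hu : ((ζ : 𝕜ˣ)⁻¹) ^ (n - j) = (ζ : 𝕜ˣ) ^ j := by
      rw [inv_pow]
      exact (eq_inv_of_mul_eq_one_left h2).symm
    exact_mod_cast congrArg Units.val hu

end GrassAux

/-- For each `j ∈ {0, …, n-1}`, the eigenspace `R̄_j = {r | ζ·r = ζ^j r}` is a free
rank one `Z̄`-module generated by `x^j` (for `j ≤ k`) resp. `y^(n-j)` (for `k ≤ j`),
and `R̄ = ⊕_{j=0}^{n-1} R̄_j` is a free `Z̄`-module of rank `n`: every element of `R̄`
is uniquely a `Z̄`-linear combination of the generators. -/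
theorem statement_1
    (𝕜 : Type) [Field 𝕜] (n k : ℕ)
    (hk1 : 1 ≤ k) (hkn : k ≤ n - 1)
    (hchar : ¬ (ringChar 𝕜 ∣ n)) (hprim : ∃ ζ : 𝕜, IsPrimitiveRoot ζ n)
    (σ : rootsOfUnity n 𝕜 →* (Rbar 𝕜 n k ≃ₐ[𝕜] Rbar 𝕜 n k))
    (hx : ∀ ζ : rootsOfUnity n 𝕜, σ ζ (xbar 𝕜 n k) = ((ζ : 𝕜ˣ) : 𝕜) • xbar 𝕜 n k)
    (hy : ∀ ζ : rootsOfUnity n 𝕜,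
      σ ζ (ybar 𝕜 n k) = (((ζ : 𝕜ˣ)⁻¹ : 𝕜ˣ) : 𝕜) • ybar 𝕜 n k) :
    (∀ j : Fin n,
      {r : Rbar 𝕜 n k | ∀ ζ : rootsOfUnity n 𝕜, σ ζ r = (((ζ : 𝕜ˣ) : 𝕜) ^ (j : ℕ)) • r} =
        {r : Rbar 𝕜 n k | ∃ z ∈ Zbar 𝕜 n k, r = z * egen 𝕜 n k (j : ℕ)}) ∧
    (∀ r : Rbar 𝕜 n k, ∃! c : Fin n → ↥(Zbar 𝕜 n k),
      r = ∑ j : Fin n, (c j : Rbar 𝕜 n k) * egen 𝕜 n k (j : ℕ)) := by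

  have hk0 : 0 < k := hk1
  have hn2 : 2 ≤ n := by omega
  haveI : NeZero n := ⟨by omega⟩
  obtain ⟨ζp, hζp⟩ := hprim
  have hpart2 : ∀ r : Rbar 𝕜 n k, ∃! c : Fin n → ↥(Zbar 𝕜 n k),
      r = ∑ j : Fin n, (c j : Rbar 𝕜 n k) * egen 𝕜 n k (j : ℕ) := by
    intro r
    obtain ⟨c, hc⟩ := GrassAux.exists_coeffs 𝕜 n k hk1 hkn r
    exact ⟨c, hc, fun c' hc' => GrassAux.unique_coeffs 𝕜 n k hk1 hkn c' c (hc'.symm.trans hc)⟩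
  refine ⟨?_, hpart2⟩
  intro j
  ext r
  simp only [Set.mem_setOf_eq]
  constructor
  · intro hr
    obtain ⟨c, hc⟩ := GrassAux.exists_coeffs 𝕜 n k hk1 hkn r
    set ζu : rootsOfUnity n 𝕜 := hζp.toRootsOfUnity with hζu
    set u : 𝕜ˣ := (ζu : 𝕜ˣ) with hu
    have huv : (u : 𝕜) = ζp := hζp.val_toRootsOfUnity_coe
    have hσr : σ ζu r = ∑ j' : Fin n,
        ((u : 𝕜) ^ (j' : ℕ)) • ((c j' : Rbar 𝕜 n k) * egen 𝕜 n k (j' : ℕ)) := by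
      rw [hc, map_sum]
      refine Finset.sum_congr rfl fun j' _ => ?_
      rw [map_mul, GrassAux.sigma_fix 𝕜 σ hx hy ζu _ (c j').2,
        GrassAux.sigma_egen 𝕜 σ hx hy ζu (j' : ℕ) j'.isLt, mul_smul_comm]
    have happ := hr ζu
    have h4 : ((u : 𝕜) ^ (j : ℕ)) • r = ∑ j' : Fin n,
        ((u : 𝕜) ^ (j' : ℕ)) • ((c j' : Rbar 𝕜 n k) * egen 𝕜 n k (j' : ℕ)) :=
      happ.symm.trans hσr
    have hinv : (((u ^ (j : ℕ))⁻¹ : 𝕜ˣ) : 𝕜) * ((u : 𝕜) ^ (j : ℕ)) = 1 := by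
      rw [← Units.val_pow_eq_pow_val, ← Units.val_mul]
      simp
    have h5 : r = ∑ j' : Fin n,
        ((u ^ (j' : ℕ) * (u ^ (j : ℕ))⁻¹ : 𝕜ˣ) : 𝕜) •
          ((c j' : Rbar 𝕜 n k) * egen 𝕜 n k (j' : ℕ)) := by
      calc r = (((u ^ (j : ℕ))⁻¹ : 𝕜ˣ) : 𝕜) • (((u : 𝕜) ^ (j : ℕ)) • r) := by
              rw [smul_smul, hinv, one_smul]
        _ = (((u ^ (j : ℕ))⁻¹ : 𝕜ˣ) : 𝕜) • ∑ j' : Fin n,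
              ((u : 𝕜) ^ (j' : ℕ)) • ((c j' : Rbar 𝕜 n k) * egen 𝕜 n k (j' : ℕ)) := by
              rw [h4]
        _ = ∑ j' : Fin n, ((u ^ (j' : ℕ) * (u ^ (j : ℕ))⁻¹ : 𝕜ˣ) : 𝕜) •
              ((c j' : Rbar 𝕜 n k) * egen 𝕜 n k (j' : ℕ)) := by
              rw [Finset.smul_sum]
              refine Finset.sum_congr rfl fun j' _ => ?_
              rw [smul_smul, ← Units.val_pow_eq_pow_val, ← Units.val_mul,
                mul_comm ((u ^ (j : ℕ))⁻¹) (u ^ (j' : ℕ))]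
    have hc' : r = ∑ j' : Fin n,
        ((⟨((u ^ (j' : ℕ) * (u ^ (j : ℕ))⁻¹ : 𝕜ˣ) : 𝕜) • (c j' : Rbar 𝕜 n k),
          (Zbar 𝕜 n k).smul_mem (c j').2 _⟩ : ↥(Zbar 𝕜 n k)) : Rbar 𝕜 n k) *
          egen 𝕜 n k (j' : ℕ) := by
      rw [h5]
      exact Finset.sum_congr rfl fun j' _ => (smul_mul_assoc _ _ _).symm
    have hceq := GrassAux.unique_coeffs 𝕜 n k hk1 hkn _ c (hc'.symm.trans hc)
    have hzero : ∀ j' : Fin n, j' ≠ j → (c j' : Rbar 𝕜 n k) = 0 := by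
      intro j' hne
      have h6 : ((u ^ (j' : ℕ) * (u ^ (j : ℕ))⁻¹ : 𝕜ˣ) : 𝕜) • (c j' : Rbar 𝕜 n k)
          = (c j' : Rbar 𝕜 n k) := congrArg Subtype.val (congrFun hceq j')
      by_contra h7
      have h9 : (((u ^ (j' : ℕ) * (u ^ (j : ℕ))⁻¹ : 𝕜ˣ) : 𝕜) - 1) • (c j' : Rbar 𝕜 n k) = 0 := by
        rw [sub_smul, h6, one_smul, sub_self]
      rcases smul_eq_zero.1 h9 with h10 | h10
      · have h8 : ((u ^ (j' : ℕ) * (u ^ (j : ℕ))⁻¹ : 𝕜ˣ) : 𝕜) = 1 := by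
          have := sub_eq_zero.1 h10
          exact this
        have h11 : (u ^ (j' : ℕ) * (u ^ (j : ℕ))⁻¹ : 𝕜ˣ) = 1 := Units.val_eq_one.1 h8
        have h12 : u ^ (j' : ℕ) = u ^ (j : ℕ) := by rwa [mul_inv_eq_one] at h11
        have h13 : ζp ^ (j' : ℕ) = ζp ^ (j : ℕ) := by
          have h14 := congrArg Units.val h12
          rwa [Units.val_pow_eq_pow_val, Units.val_pow_eq_pow_val, huv] at h14
        exact hne (Fin.ext (hζp.pow_inj j'.isLt j.isLt h13))
      · exact h7 h10
    refine ⟨(c j : Rbar 𝕜 n k), (c j).2, ?_⟩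
    rw [hc]
    exact Finset.sum_eq_single j (fun j' _ hne => by rw [hzero j' hne, zero_mul])
      (fun h => absurd (Finset.mem_univ j) h)
  · rintro ⟨z, hz, rfl⟩
    intro ζ
    rw [map_mul, GrassAux.sigma_fix 𝕜 σ hx hy ζ z hz,
      GrassAux.sigma_egen 𝕜 σ hx hy ζ (j : ℕ) j.isLt, mul_smul_comm]
end
end

section
/- The vectors α_1, …, α_{n−1}, β_{[n]} form a ℤ-basis of the lattice ℤⁿ(k). With respect to this basis the symmetric bilinear form b has Gram matrix equal to the Cartan matrix C of the graph J_{k,n}: writing v_j = α_j for 1 ≤ j ≤ n−1 and v_n = β_{[n]}, one has b(v_i, v_j) = C_{ij} for all i, j. Moreover, for x = Σ_j c_j v_j one has δ(x) = c_n, and q(β_I) = 2 for every k-element subset I ⊆ {1,…,n}. -/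
def cext (n : ℕ) (c : Fin n → ℤ) : ℕ → ℤ := fun m => if h : m < n then c ⟨m, h⟩ else 0

lemma cext_lt {n : ℕ} {c : Fin n → ℤ} {m : ℕ} (h : m < n) : cext n c m = c ⟨m, h⟩ :=
  dif_pos h

lemma aux_const (n k : ℕ) (hk : k ≤ n) (z : ℤ) :
    ∑ m ∈ Finset.range n, (if m < k then z else 0) = k * z := by
  rw [← Finset.sum_subset (Finset.range_subset_range.2 hk)]
  · rw [Finset.sum_congr rfl (fun m hm => if_pos (Finset.mem_range.1 hm)),
      Finset.sum_const, Finset.card_range, nsmul_eq_mul]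
  · intro m hm hm'
    rw [if_neg]
    simp only [Finset.mem_range] at hm hm'
    omega

lemma aux_shift (n : ℕ) (hn : 1 ≤ n) (C : ℕ → ℤ) :
    ∑ m ∈ Finset.range n, (if 1 ≤ m then C (m-1) else 0)
      = ∑ m ∈ Finset.range (n-1), C m := by
  rw [show n = (n-1)+1 by omega, Finset.sum_range_succ']
  simp

lemma aux_trunc (n : ℕ) (C : ℕ → ℤ) :
    ∑ m ∈ Finset.range n, (if m < n-1 then C m else 0)
      = ∑ m ∈ Finset.range (n-1), C m := by
  rw [← Finset.sum_subset (Finset.range_subset_range.2 (by omega : n-1 ≤ n))]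
  · exact Finset.sum_congr rfl fun m hm => if_pos (Finset.mem_range.1 hm)
  · intro m hm hm'
    rw [if_neg]
    simp only [Finset.mem_range] at hm hm'
    omega

lemma aux_single (n : ℕ) (f : Fin n → ℤ) (m : ℕ) (hm : m < n) :
    (∑ j : Fin n, if (j:ℕ) = m then f j else 0) = f ⟨m, hm⟩ := by
  rw [Finset.sum_eq_single ⟨m, hm⟩]
  · simp
  · intro j _ hj
    exact if_neg fun h => hj (Fin.ext h)
  · simp

lemma coord (n k : ℕ) (hk1 : 1 ≤ k) (hkn : k ≤ n - 1)
    (v : Fin n → (Fin n → ℤ))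
    (hv : ∀ j : Fin n, v j =
      if (j : ℕ) < n - 1 then
        (fun i : Fin n => (if (i : ℕ) = (j : ℕ) + 1 then 1 else 0) -
          (if (i : ℕ) = (j : ℕ) then 1 else 0))
      else (fun i : Fin n => if (i : ℕ) < k then 1 else 0))
    (c : Fin n → ℤ) (i : Fin n) :
    (∑ j, c j • v j) i =
      (if 1 ≤ (i:ℕ) then cext n c ((i:ℕ)-1) else 0)
      - (if (i:ℕ) < n-1 then cext n c (i:ℕ) else 0)
      + (if (i:ℕ) < k then cext n c (n-1) else 0) := by
  have hn : 2 ≤ n := by omega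
  have h1 : (∑ j, c j • v j) i = ∑ j, c j * v j i := by
    rw [Finset.sum_apply]
    exact Finset.sum_congr rfl fun j _ => rfl
  rw [h1]
  have h2 : ∀ j : Fin n, c j * v j i =
      (if (j:ℕ) = (i:ℕ) - 1 ∧ 1 ≤ (i:ℕ) then c j else 0)
      - (if (j:ℕ) = (i:ℕ) ∧ (i:ℕ) < n - 1 then c j else 0)
      + (if (j:ℕ) = n - 1 ∧ (i:ℕ) < k then c j else 0) := by
    intro j
    have hi2 := i.2
    have hj2 := j.2
    rw [hv j]
    rcases lt_or_ge (j:ℕ) (n-1) with hj | hj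
    · rw [if_pos hj]
      split_ifs <;> first | (exfalso; omega) | ring1
    · rw [if_neg (not_lt.2 hj)]
      split_ifs <;> first | (exfalso; omega) | ring1
  rw [Finset.sum_congr rfl fun j _ => h2 j, Finset.sum_add_distrib, Finset.sum_sub_distrib]
  congr 1
  · congr 1
    · by_cases hi : 1 ≤ (i:ℕ)
      · rw [if_pos hi]
        rw [Finset.sum_congr rfl (fun j _ => if_congr (and_iff_left hi) rfl rfl),
          aux_single n c ((i:ℕ)-1) (Nat.lt_of_le_of_lt (Nat.sub_le _ _) i.2),
          cext_lt (Nat.lt_of_le_of_lt (Nat.sub_le _ _) i.2)]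
      · rw [if_neg hi]
        exact Finset.sum_eq_zero fun j _ => if_neg (fun h => hi h.2)
    · by_cases hi : (i:ℕ) < n - 1
      · rw [if_pos hi]
        rw [Finset.sum_congr rfl (fun j _ => if_congr (and_iff_left hi) rfl rfl),
          aux_single n c (i:ℕ) i.2, cext_lt i.2]
      · rw [if_neg hi]
        exact Finset.sum_eq_zero fun j _ => if_neg (fun h => hi h.2)
  · by_cases hi : (i:ℕ) < k
    · rw [if_pos hi]
      rw [Finset.sum_congr rfl (fun j _ => if_congr (and_iff_left hi) rfl rfl),
        aux_single n c (n-1) (by omega), cext_lt (show n-1 < n by omega)]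
    · rw [if_neg hi]
      exact Finset.sum_eq_zero fun j _ => if_neg (fun h => hi h.2)

lemma totalsum (n k : ℕ) (hk1 : 1 ≤ k) (hkn : k ≤ n - 1)
    (v : Fin n → (Fin n → ℤ))
    (hv : ∀ j : Fin n, v j =
      if (j : ℕ) < n - 1 then
        (fun i : Fin n => (if (i : ℕ) = (j : ℕ) + 1 then 1 else 0) -
          (if (i : ℕ) = (j : ℕ) then 1 else 0))
      else (fun i : Fin n => if (i : ℕ) < k then 1 else 0))
    (c : Fin n → ℤ) :
    ∑ i, (∑ j, c j • v j) i = (k:ℤ) * cext n c (n-1) := by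
  have hn : 2 ≤ n := by omega
  calc ∑ i : Fin n, (∑ j, c j • v j) i
      = ∑ i : Fin n, (fun m : ℕ =>
          (if 1 ≤ m then cext n c (m-1) else 0)
          - (if m < n-1 then cext n c m else 0)
          + (if m < k then cext n c (n-1) else 0)) (i:ℕ) :=
        Finset.sum_congr rfl fun i _ => coord n k hk1 hkn v hv c i
    _ = ∑ m ∈ Finset.range n, ((if 1 ≤ m then cext n c (m-1) else 0)
          - (if m < n-1 then cext n c m else 0)
          + (if m < k then cext n c (n-1) else 0)) :=
        Fin.sum_univ_eq_sum_range (fun m =>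
          (if 1 ≤ m then cext n c (m-1) else 0)
          - (if m < n-1 then cext n c m else 0)
          + (if m < k then cext n c (n-1) else 0)) n
    _ = (k:ℤ) * cext n c (n-1) := by
        rw [Finset.sum_add_distrib, Finset.sum_sub_distrib,
          aux_shift n (by omega) (cext n c), aux_trunc n (cext n c),
          aux_const n k (by omega) (cext n c (n-1))]
        ring
/-- The vectors `α_1, …, α_{n-1}, β_{[n]}` form a `ℤ`-basis of the lattice
`ℤⁿ(k) = {x : Σᵢ xᵢ ≡ 0 mod k}`; with respect to this basis the symmetric bilinear
form `b` associated to `q` has Gram matrix the Cartan matrix of the graph `J_{k,n}`;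
the grading `δ` of `Σ c_j v_j` is the coefficient `c_n`; and `q(β_I) = 2` for every
`k`-element subset `I ⊆ {1, …, n}`. -/
theorem statement_18
    (n k : ℕ) (hk1 : 1 ≤ k) (hkn : k ≤ n - 1)
    (L : Set (Fin n → ℤ)) (hL : L = {x | (k : ℤ) ∣ ∑ i, x i})
    (δ : (Fin n → ℤ) → ℤ) (hδ : ∀ x, δ x = (∑ i, x i) / (k : ℤ))
    (q : (Fin n → ℤ) → ℤ)
    (hq : ∀ x, q x = (∑ i, (x i) ^ 2) + (2 - (k : ℤ)) * (δ x) ^ 2)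
    (b : (Fin n → ℤ) → (Fin n → ℤ) → ℤ)
    (hb : ∀ u v, b u v = (q (u + v) - q u - q v) / 2)
    -- `v j` is `α_{j+1} = e_{j+2} - e_{j+1}` (1-indexed) for `j < n-1`,
    -- and `v (n-1) = β_{[n]} = e_1 + ⋯ + e_k`.
    (v : Fin n → (Fin n → ℤ))
    (hv : ∀ j : Fin n, v j =
      if (j : ℕ) < n - 1 then
        (fun i : Fin n => (if (i : ℕ) = (j : ℕ) + 1 then 1 else 0) -
          (if (i : ℕ) = (j : ℕ) then 1 else 0))
      else (fun i : Fin n => if (i : ℕ) < k then 1 else 0))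
    -- the Cartan matrix of the graph `J_{k,n}` (0-indexed: the node `n-1` is the
    -- extra node, joined to the node `k-1`, i.e. to `v_k` in 1-indexed notation)
    (C : Fin n → Fin n → ℤ)
    (hC : ∀ i j : Fin n, C i j =
      if i = j then 2
      else if (((i : ℕ) < n - 1 ∧ (j : ℕ) < n - 1) ∧
                ((i : ℕ) + 1 = (j : ℕ) ∨ (j : ℕ) + 1 = (i : ℕ))) ∨
              ((i : ℕ) = n - 1 ∧ (j : ℕ) + 1 = k) ∨
              ((j : ℕ) = n - 1 ∧ (i : ℕ) + 1 = k) then -1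
      else 0) :
    (∀ j, v j ∈ L) ∧
    (∀ u ∈ L, ∀ w ∈ L, (2 : ℤ) ∣ (q (u + w) - q u - q w)) ∧
    (∀ x ∈ L, ∃! c : Fin n → ℤ, x = ∑ j, c j • v j) ∧
    (∀ i j, b (v i) (v j) = C i j) ∧
    (∀ c : Fin n → ℤ, δ (∑ j, c j • v j) = c ⟨n - 1, by omega⟩) ∧
    (∀ I : Finset (Fin n), I.card = k →
      q (fun i => if i ∈ I then 1 else 0) = 2) := by
  have hn : 2 ≤ n := by omega
  have hk0 : (k:ℤ) ≠ 0 := Int.natCast_ne_zero.mpr (by omega)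
  -- sum of entries of basis vectors
  have hvsum : ∀ j : Fin n, ∑ i, v j i = if (j:ℕ) < n-1 then 0 else (k:ℤ) := by
    intro j
    rcases lt_or_ge (j:ℕ) (n-1) with hj | hj
    · rw [if_pos hj]
      simp only [hv j, if_pos hj]
      rw [Finset.sum_sub_distrib,
        aux_single n (fun _ => (1:ℤ)) ((j:ℕ)+1) (by omega),
        aux_single n (fun _ => (1:ℤ)) (j:ℕ) (by omega), sub_self]
    · rw [if_neg (not_lt.2 hj)]
      simp only [hv j, if_neg (not_lt.2 hj)]
      rw [Fin.sum_univ_eq_sum_range (fun m => if m < k then (1:ℤ) else 0) n,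
        aux_const n k (by omega) 1, mul_one]
  have hmem' : ∀ j : Fin n, (k:ℤ) ∣ ∑ i, v j i := by
    intro j
    rw [hvsum]
    split_ifs
    · exact dvd_zero _
    · exact dvd_refl _
  have hmem : ∀ j, v j ∈ L := by
    intro j
    rw [hL]
    exact hmem' j
  have hδv : ∀ j : Fin n, δ (v j) = if (j:ℕ) < n-1 then 0 else 1 := by
    intro j
    rw [hδ, hvsum]
    split_ifs
    · exact Int.zero_ediv _
    · exact Int.ediv_self hk0
  -- polarization identity
  have hpol : ∀ u w : Fin n → ℤ, (k:ℤ) ∣ ∑ i, u i → (k:ℤ) ∣ ∑ i, w i →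
      q (u+w) - q u - q w = 2 * ((∑ i, u i * w i) + (2 - (k:ℤ)) * (δ u * δ w)) := by
    intro u w hu hw
    have hadd : ∑ i, (u+w) i = (∑ i, u i) + ∑ i, w i := by
      rw [← Finset.sum_add_distrib]
      exact Finset.sum_congr rfl fun i _ => rfl
    have hδadd : δ (u+w) = δ u + δ w := by
      rw [hδ, hδ, hδ, hadd, Int.add_ediv_of_dvd_left hu]
    have hsq : ∑ i, ((u+w) i)^2
        = (∑ i, (u i)^2) + 2*(∑ i, u i * w i) + ∑ i, (w i)^2 := by
      rw [Finset.mul_sum, ← Finset.sum_add_distrib, ← Finset.sum_add_distrib]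
      exact Finset.sum_congr rfl fun i _ => by
        show (u i + w i)^2 = _
        ring
    rw [hq, hq, hq, hδadd, hsq]
    ring
  have hbform : ∀ u w : Fin n → ℤ, (k:ℤ) ∣ ∑ i, u i → (k:ℤ) ∣ ∑ i, w i →
      b u w = (∑ i, u i * w i) + (2 - (k:ℤ)) * (δ u * δ w) := by
    intro u w hu hw
    rw [hb, hpol u w hu hw]
    exact Int.mul_ediv_cancel_left _ two_ne_zero
  -- the grading of a combination
  have hdelta : ∀ c : Fin n → ℤ, δ (∑ j, c j • v j) = cext n c (n-1) := by
    intro c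
    rw [hδ, totalsum n k hk1 hkn v hv c]
    exact Int.mul_ediv_cancel_left _ hk0
  -- the Gram matrix
  have hCsymm : ∀ i j : Fin n, C i j = C j i := by
    intro i j
    rw [hC, hC]
    simp only [Fin.ext_iff]
    split_ifs <;> omega
  have hdot : ∀ i : Fin n, ∀ _hi : (i:ℕ) < n-1, ∀ f : Fin n → ℤ,
      ∑ t, v i t * f t = f ⟨(i:ℕ)+1, by omega⟩ - f ⟨(i:ℕ), i.2⟩ := by
    intro i hi f
    simp only [hv i, if_pos hi, sub_mul, ite_mul, one_mul, zero_mul]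
    rw [Finset.sum_sub_distrib, aux_single n f ((i:ℕ)+1) (by omega),
      aux_single n f (i:ℕ) i.2]
  have hrow : ∀ i j : Fin n, (i:ℕ) < n-1 → b (v i) (v j) = C i j := by
    intro i j hi
    have hδi : δ (v i) = 0 := by rw [hδv]; exact if_pos hi
    rw [hbform _ _ (hmem' i) (hmem' j), hdot i hi (v j), hδi, zero_mul, mul_zero,
      add_zero, hC]
    rcases lt_or_ge (j:ℕ) (n-1) with hj | hj
    · rw [hv j, if_pos hj]
      simp only [Fin.ext_iff]
      split_ifs <;> omega
    · rw [hv j, if_neg (not_lt.2 hj)]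
      have hj2 := j.2
      simp only [Fin.ext_iff]
      split_ifs <;> omega
  have hgram : ∀ i j, b (v i) (v j) = C i j := by
    intro i j
    by_cases hi : (i:ℕ) < n-1
    · exact hrow i j hi
    · by_cases hj : (j:ℕ) < n-1
      · have hsymm : b (v i) (v j) = b (v j) (v i) := by
          rw [hb, hb, add_comm (v i) (v j)]
          congr 1
          ring
        rw [hsymm, hrow j i hj, hCsymm]
      · have hi' : (i:ℕ) = n-1 := by have := i.2; omega
        have hj' : (j:ℕ) = n-1 := by have := j.2; omega
        have hij : i = j := Fin.ext (by omega)
        rw [hbform _ _ (hmem' i) (hmem' j), hδv, hδv, if_neg hi, if_neg hj]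
        have hdd : ∑ t, v i t * v j t = (k:ℤ) := by
          calc ∑ t, v i t * v j t = ∑ t : Fin n, if (t:ℕ) < k then (1:ℤ) else 0 := by
                refine Finset.sum_congr rfl fun t _ => ?_
                rw [hv i, if_neg hi, hv j, if_neg hj]
                show (if (t:ℕ) < k then (1:ℤ) else 0) * (if (t:ℕ) < k then (1:ℤ) else 0) = _
                split_ifs <;> ring
            _ = (k:ℤ) := by
                rw [Fin.sum_univ_eq_sum_range (fun m => if m < k then (1:ℤ) else 0) n,
                  aux_const n k (by omega) 1, mul_one]
        rw [hdd, hC, if_pos hij]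
        ring
  refine ⟨hmem, ?_, ?_, hgram, ?_, ?_⟩
  · -- evenness
    intro u hu w hw
    rw [hL] at hu hw
    exact ⟨_, hpol u w hu hw⟩
  · -- basis
    intro x hx
    rw [hL] at hx
    replace hx : (k:ℤ) ∣ ∑ i, x i := hx
    set d : ℤ := (∑ i, x i) / (k:ℤ) with hd
    have hkd : (k:ℤ) * d = ∑ i, x i := by rw [hd]; exact Int.mul_ediv_cancel' hx
    have hSxn : ∑ t ∈ Finset.range n, cext n x t = ∑ i, x i := by
      rw [← Fin.sum_univ_eq_sum_range (cext n x) n]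
      exact Finset.sum_congr rfl fun i _ => cext_lt i.2
    set cdef : Fin n → ℤ := fun j => if (j:ℕ) = n-1 then d
        else ((min ((j:ℕ)+1) k : ℕ) : ℤ) * d - ∑ t ∈ Finset.range ((j:ℕ)+1), cext n x t
      with hcdef
    have hcd : ∀ (p : ℕ) (hp : p < n), cext n cdef p =
        if p = n-1 then d
        else ((min (p+1) k : ℕ) : ℤ) * d - ∑ t ∈ Finset.range (p+1), cext n x t := by
      intro p hp
      rw [cext_lt hp]
    have hex : x = ∑ j, cdef j • v j := by
      funext i
      rw [coord n k hk1 hkn v hv cdef i]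
      have hi2 := i.2
      by_cases hin : (i:ℕ) = n-1
      · rw [if_pos (by omega : 1 ≤ (i:ℕ)), if_neg (by omega : ¬ (i:ℕ) < n-1),
          if_neg (by omega : ¬ (i:ℕ) < k),
          hcd ((i:ℕ)-1) (by omega), if_neg (by omega),
          show (i:ℕ)-1+1 = n-1 by omega, show min (n-1) k = k by omega]
        have h1 := Finset.sum_range_succ (cext n x) (n-1)
        rw [show n-1+1 = n by omega] at h1
        have hsplit : ∑ i, x i = (∑ t ∈ Finset.range (n-1), cext n x t) + x i := by
          rw [← hSxn, h1, cext_lt (show n-1 < n by omega)]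
          congr 1
          exact congrArg x (Fin.ext (show n-1 = (i:ℕ) by omega))
        rw [hkd, hsplit]
        ring
      · by_cases hi0 : (i:ℕ) = 0
        · rw [if_neg (by omega : ¬ 1 ≤ (i:ℕ)), if_pos (by omega : (i:ℕ) < n-1),
            if_pos (by omega : (i:ℕ) < k), hcd (i:ℕ) i.2, if_neg (by omega),
            hcd (n-1) (by omega), if_pos rfl, hi0,
            show min (0+1) k = 1 by omega, Finset.sum_range_one,
            cext_lt (show 0 < n by omega),
            show x ⟨0, show 0 < n by omega⟩ = x i from congrArg x (Fin.ext (show 0 = (i:ℕ) by omega))]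
          push_cast
          ring
        · rw [if_pos (by omega), if_pos (by omega), hcd ((i:ℕ)-1) (by omega),
            if_neg (by omega), hcd (i:ℕ) i.2, if_neg (by omega),
            hcd (n-1) (by omega), if_pos rfl,
            show (i:ℕ)-1+1 = (i:ℕ) by omega, Finset.sum_range_succ, cext_lt i.2,
            show x ⟨(i:ℕ), i.2⟩ = x i from congrArg x (Fin.ext rfl)]
          by_cases hik : (i:ℕ) < k
          · rw [if_pos hik, show min ((i:ℕ)+1) k = (i:ℕ)+1 by omega,
              show min (i:ℕ) k = (i:ℕ) by omega]
            push_cast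
            ring
          · rw [if_neg hik, show min ((i:ℕ)+1) k = k by omega,
              show min (i:ℕ) k = k by omega]
            ring
    refine ⟨cdef, hex, ?_⟩
    intro y hy
    have h := hy.symm.trans hex
    have hlast : cext n y (n-1) = cext n cdef (n-1) := by
      rw [← hdelta y, ← hdelta cdef, h]
    have hco : ∀ (m : ℕ) (hm : m < n),
        (if 1 ≤ m then cext n y (m-1) else 0) - (if m < n-1 then cext n y m else 0)
          + (if m < k then cext n y (n-1) else 0)
        = (if 1 ≤ m then cext n cdef (m-1) else 0)
          - (if m < n-1 then cext n cdef m else 0)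
          + (if m < k then cext n cdef (n-1) else 0) := by
      intro m hm
      have hm' := congrFun h ⟨m, hm⟩
      rwa [coord n k hk1 hkn v hv y ⟨m, hm⟩, coord n k hk1 hkn v hv cdef ⟨m, hm⟩] at hm'
    have hext : ∀ m : ℕ, m < n → cext n y m = cext n cdef m := by
      intro m
      induction m with
      | zero =>
        intro h0
        have e := hco 0 h0
        split_ifs at e <;> omega
      | succ p ih =>
        intro hp1
        by_cases hpn : p+1 = n-1
        · rw [show p+1 = n-1 from hpn]
          exact hlast
        · have e := hco (p+1) hp1
          simp only [Nat.add_sub_cancel] at e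
          have ihp := ih (by omega)
          split_ifs at e <;> omega
    funext jj
    have hjj := hext (jj:ℕ) jj.2
    rwa [cext_lt jj.2, cext_lt jj.2] at hjj
  · -- grading
    intro c
    rw [hdelta c]
    exact cext_lt (by omega)
  · -- q(β_I) = 2
    intro I hI
    have hsum : ∑ i, (if i ∈ I then (1:ℤ) else 0) = (k:ℤ) := by
      rw [Finset.sum_ite_mem, Finset.univ_inter, Finset.sum_const, hI,
        nsmul_eq_mul, mul_one]
    have hsq : ∑ i, (if i ∈ I then (1:ℤ) else 0)^2 = (k:ℤ) := by
      rw [← hsum]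
      exact Finset.sum_congr rfl fun i _ => by split_ifs <;> ring
    rw [hq, hδ]
    show (∑ i, (if i ∈ I then (1:ℤ) else 0)^2) + (2 - (k:ℤ)) *
      ((∑ i, (if i ∈ I then (1:ℤ) else 0)) / (k:ℤ))^2 = 2
    rw [hsq, hsum, Int.ediv_self hk0]
    ring
end

section
/- Let Q₀ be a finite set, B : Q₀ × Q₀ → ℤ a skew-symmetric integer matrix, Λ an additive abelian group, and d : Q₀ → Λ a balanced assignment, i.e. for every vertex v: Σᵢ [B_{iv}]₊ · dᵢ = Σᵢ [B_{vi}]₊ · dᵢ (where [x]₊ = max(x,0) and the dot denotes the ℤ-action on Λ). Fix m ∈ Q₀ and define the mutated matrix B′ = μ_m(B) by B′_{ij} = −B_{ij} if i = m or j = m, and B′_{ij} = B_{ij} + [B_{im}]₊[B_{mj}]₊ − [−B_{im}]₊[−B_{mj}]₊ otherwise, and the mutated assignment d′ by d′_m = (Σᵢ [B_{im}]₊ · dᵢ) − d_m and d′_i = d_i for i ≠ m. Then B′ is skew-symmetric and d′ is balanced for B′. (This is the inductive step showing that all cluster variables of the Grassmannian cluster algebra are multihomogeneous: seeds of torus eigenfunctions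 with balanced multidegrees remain so under mutation.) -/
/-- Fomin–Zelevinsky mutation preserves skew-symmetry and preserves balanced
assignments of multidegrees: if `d` is balanced for the skew-symmetric matrix `B`,
then the mutated assignment `d'` is balanced for the mutated matrix `B' = μ_m(B)`.
(This is the inductive step showing that all cluster variables of the Grassmannian
cluster algebra are multihomogeneous.) -/
theorem statement_19
    (Q₀ : Type) [Fintype Q₀] [DecidableEq Q₀] (Λ : Type) [AddCommGroup Λ]
    (B : Q₀ → Q₀ → ℤ) (hskew : ∀ i j, B j i = - B i j)
    (d : Q₀ → Λ)
    (hbal : ∀ v : Q₀, ∑ i, (max (B i v) 0) • d i = ∑ i, (max (B v i) 0) • d i)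
    (m : Q₀)
    (B' : Q₀ → Q₀ → ℤ)
    (hB' : ∀ i j, B' i j =
      if i = m ∨ j = m then - B i j
      else B i j + max (B i m) 0 * max (B m j) 0 - max (- B i m) 0 * max (- B m j) 0)
    (d' : Q₀ → Λ)
    (hd'm : d' m = (∑ i, (max (B i m) 0) • d i) - d m)
    (hd' : ∀ i, i ≠ m → d' i = d i) :
    (∀ i j, B' j i = - B' i j) ∧
    (∀ v : Q₀, ∑ i, (max (B' i v) 0) • d' i = ∑ i, (max (B' v i) 0) • d' i) := by
  classical
  have hBmm : B m m = 0 := by have := hskew m m; omega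
  -- skew symmetry of B'
  have hskew' : ∀ i j, B' j i = - B' i j := by
    intro i j
    rw [hB' j i, hB' i j]
    by_cases h : i = m ∨ j = m
    · rw [if_pos h.symm, if_pos h, hskew i j]
    · rw [if_neg (by tauto), if_neg h, hskew i j, hskew m j, hskew i m]
      simp only [neg_neg]
      ring
  -- with skew symmetry, balancedness is equivalent to ∑ C i v • e i = 0
  have key : ∀ (C : Q₀ → Q₀ → ℤ), (∀ i j, C j i = - C i j) → ∀ (e : Q₀ → Λ) (v : Q₀),
      ((∑ i, (max (C i v) 0) • e i = ∑ i, (max (C v i) 0) • e i) ↔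
        ∑ i, (C i v) • e i = 0) := by
    intro C hC e v
    have hsub : ∑ i, (max (C i v) 0) • e i - ∑ i, (max (C v i) 0) • e i
        = ∑ i, (C i v) • e i := by
      rw [← Finset.sum_sub_distrib]
      refine Finset.sum_congr rfl fun i _ => ?_
      rw [hC v i, ← sub_smul]
      congr 1
      omega
    rw [← sub_eq_zero, hsub]
  have hbal0 : ∀ v, ∑ i, (B i v) • d i = 0 := fun v => (key B hskew d v).mp (hbal v)
  refine ⟨hskew', fun v => (key B' hskew' d' v).mpr ?_⟩
  by_cases hv : v = m
  · rw [hv]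
    have hterm : ∀ i, B' i m • d' i = -(B i m • d i) := by
      intro i
      by_cases hi : i = m
      · rw [hi, hB' m m, if_pos (Or.inl rfl), hBmm]
        simp
      · rw [hB' i m, if_pos (Or.inr rfl), hd' i hi, neg_smul]
    simp only [hterm]
    rw [Finset.sum_neg_distrib, hbal0 m, neg_zero]
  · -- v ≠ m
    set S : Λ := ∑ i, (max (B i m) 0) • d i with hS
    have hmem : m ∈ (Finset.univ : Finset Q₀) := Finset.mem_univ m
    -- split the sum at m
    rw [← Finset.add_sum_erase _ _ hmem]
    -- rewrite each term with i ≠ m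
    have hErw : ∀ i ∈ Finset.univ.erase m, B' i v • d' i
        = B i v • d i + max (B m v) 0 • (max (B i m) 0 • d i)
          - max (B v m) 0 • (max (B m i) 0 • d i) := by
      intro i hi
      have hi' : i ≠ m := Finset.ne_of_mem_erase hi
      rw [hB' i v, if_neg (by tauto), hd' i hi', ← hskew i m, ← hskew m v]
      module
    rw [Finset.sum_congr rfl hErw, Finset.sum_sub_distrib, Finset.sum_add_distrib,
      ← Finset.smul_sum, ← Finset.smul_sum]
    -- evaluate the three partial sums
    have hE1 : ∑ i ∈ Finset.univ.erase m, B i v • d i = -(B m v • d m) := by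
      have h := hbal0 v
      rw [← Finset.add_sum_erase _ _ hmem] at h
      exact eq_neg_of_add_eq_zero_right h
    have h2 := Finset.add_sum_erase Finset.univ (fun i => (max (B i m) 0) • d i) hmem
    simp only [hBmm, max_self, zero_smul, zero_add] at h2
    have hE2 : ∑ i ∈ Finset.univ.erase m, (max (B i m) 0) • d i = S := h2.trans hS.symm
    have h3 := Finset.add_sum_erase Finset.univ (fun i => (max (B m i) 0) • d i) hmem
    simp only [hBmm, max_self, zero_smul, zero_add] at h3
    have hE3 : ∑ i ∈ Finset.univ.erase m, (max (B m i) 0) • d i = S :=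
      h3.trans ((hbal m).symm.trans hS.symm)
    rw [hE1, hE2, hE3, hB' m v, if_pos (Or.inl rfl), hd'm]
    have hab : max (B m v) 0 - max (B v m) 0 = B m v := by
      have := hskew m v
      omega
    have hss : (max (B m v) 0) • S - (max (B v m) 0) • S = B m v • S := by
      rw [← sub_smul, hab]
    rw [add_sub_assoc, hss]
    module
end
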